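/- Let x be an ordinal with Cantor normal form leading term ω^α·n (i.e., ω^α·n ≤ x < ω^α·(n+1)) where n ≥ 1 is a natural number, and let y, z be ordinals with x ≤ y ⊕ z and z < ω^α, where ⊕ is the natural sum. Then ω^α·n ≤ y. -/

import Mathlib

universe u

namespace Ordinal

noncomputable def nadd : Ordinal.{u} → Ordinal.{u} → Ordinal.{u}
  | a, b =>
    max (blsub.{u, u} a fun a' _ => nadd a' b) (blsub.{u, u} b fun b' _ => nadd a b')
termination_by o₁ o₂ => (o₁, o₂)

end Ordinal

namespace NaturalOps

infixl:65 " ♯ " => Ordinal.nadd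

end NaturalOps

open Ordinal NaturalOps

theorem nadd_def' (a b : Ordinal.{u}) : a ♯ b =
    max (blsub.{u, u} a fun a' _ => a' ♯ b) (blsub.{u, u} b fun b' _ => a ♯ b') := by
  rw [Ordinal.nadd]

theorem lt_nadd_iff {a b c : Ordinal.{u}} :
    a < b ♯ c ↔ (∃ b' < b, a ≤ b' ♯ c) ∨ ∃ c' < c, a ≤ b ♯ c' := by
  rw [nadd_def']
  simp [lt_blsub_iff]

theorem nadd_le_iff {a b c : Ordinal.{u}} :
    b ♯ c ≤ a ↔ (∀ b' < b, b' ♯ c < a) ∧ ∀ c' < c, b ♯ c' < a := by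
  rw [nadd_def']
  simp [blsub_le_iff]

theorem nadd_lt_nadd_left {b c : Ordinal.{u}} (h : b < c) (a : Ordinal.{u}) : a ♯ b < a ♯ c :=
  lt_nadd_iff.2 (Or.inr ⟨b, h, le_rfl⟩)

theorem nadd_lt_nadd_right {b c : Ordinal.{u}} (h : b < c) (a : Ordinal.{u}) : b ♯ a < c ♯ a :=
  lt_nadd_iff.2 (Or.inl ⟨b, h, le_rfl⟩)

@[simp]
theorem nadd_zero (a : Ordinal.{u}) : a ♯ 0 = a := by
  induction a using Ordinal.induction with
  | h a IH =>
  rw [nadd_def', blsub_zero, max_zero_right]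
  convert blsub_id a
  rename_i hb
  exact IH _ hb

@[simp]
theorem zero_nadd (a : Ordinal.{u}) : 0 ♯ a = a := by
  induction a using Ordinal.induction with
  | h a IH =>
  rw [nadd_def', blsub_zero, max_zero_left]
  convert blsub_id a
  rename_i hb
  exact IH _ hb

private theorem nadd_key (δ : Ordinal)
    (H : ∀ r s, r < ω ^ δ → s < ω ^ δ → r ♯ s < ω ^ δ) :
    ∀ v a b (m k : ℕ) (r s : Ordinal), r < ω ^ δ → s < ω ^ δ →
      a ≤ ω ^ δ * m + r → b ≤ ω ^ δ * k + s → a ♯ b ≤ v →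
      a ♯ b ≤ ω ^ δ * (m + k : ℕ) + (r ♯ s) := by
  intro v
  induction v using Ordinal.induction with
  | h v IH =>
  intro a b m k r s hr hs ha hb hv
  have hω : (0 : Ordinal) < ω ^ δ := opow_pos δ omega0_pos
  have step : ∀ (a' b' : Ordinal) (m' k' : ℕ) (r' s' : Ordinal), r' < ω ^ δ → s' < ω ^ δ →
      a' ≤ ω ^ δ * m' + r' → b' ≤ ω ^ δ * k' + s' → a' ♯ b' < v →
      a' ♯ b' ≤ ω ^ δ * (m' + k' : ℕ) + (r' ♯ s') := by
    intro a' b' m' k' r' s' hr' hs' ha' hb' hlt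
    exact IH _ hlt a' b' m' k' r' s' hr' hs' ha' hb' le_rfl
  rw [nadd_le_iff]
  constructor
  · -- a' < a
    intro a' ha'
    have ha'b : a' ♯ b < v := lt_of_lt_of_le (nadd_lt_nadd_right ha' b) hv
    have ha'lt : a' < ω ^ δ * m + r := lt_of_lt_of_le ha' ha
    by_cases h : ω ^ δ * m ≤ a'
    · have hr' : a' - ω ^ δ * m < r := by
        rwa [sub_lt_of_le h]
      have key := step a' b m k (a' - ω ^ δ * m) s (hr'.trans hr) hs
        (Ordinal.le_add_sub a' _) hb ha'b
      calc a' ♯ b ≤ ω ^ δ * (m + k : ℕ) + ((a' - ω ^ δ * m) ♯ s) := key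
        _ < ω ^ δ * (m + k : ℕ) + (r ♯ s) :=
          (add_lt_add_iff_left _).2 (nadd_lt_nadd_right hr' s)
    · push_neg at h
      obtain ⟨m', rfl⟩ : ∃ m', m = m' + 1 := by
        cases m with
        | zero => simp at h
        | succ m' => exact ⟨m', rfl⟩
      have hsplit : (ω ^ δ) * ((m' + 1 : ℕ) : Ordinal) = ω ^ δ * m' + ω ^ δ := by
        push_cast; rw [mul_add, mul_one]
      have h2 : a' < ω ^ δ * m' + ω ^ δ := by rw [← hsplit]; exact h
      have hr'' : a' - ω ^ δ * m' < ω ^ δ := sub_lt_of_lt_add h2 hω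
      have key := step a' b m' k (a' - ω ^ δ * m') s hr'' hs
        (Ordinal.le_add_sub a' _) hb ha'b
      calc a' ♯ b ≤ ω ^ δ * (m' + k : ℕ) + ((a' - ω ^ δ * m') ♯ s) := key
        _ < ω ^ δ * (m' + k : ℕ) + ω ^ δ := (add_lt_add_iff_left _).2 (H _ _ hr'' hs)
        _ = ω ^ δ * ((m' + k + 1 : ℕ) : Ordinal) := by
            rw [Nat.cast_add_one, mul_add, mul_one]
        _ = ω ^ δ * ((m' + 1 + k : ℕ) : Ordinal) := by
            rw [show m' + k + 1 = m' + 1 + k from by omega]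
        _ ≤ ω ^ δ * (m' + 1 + k : ℕ) + (r ♯ s) := le_self_add
  · -- b' < b
    intro b' hb'
    have hab' : a ♯ b' < v := lt_of_lt_of_le (nadd_lt_nadd_left hb' a) hv
    have hb'lt : b' < ω ^ δ * k + s := lt_of_lt_of_le hb' hb
    by_cases h : ω ^ δ * k ≤ b'
    · have hs' : b' - ω ^ δ * k < s := by
        rwa [sub_lt_of_le h]
      have key := step a b' m k r (b' - ω ^ δ * k) hr (hs'.trans hs)
        ha (Ordinal.le_add_sub b' _) hab'
      calc a ♯ b' ≤ ω ^ δ * (m + k : ℕ) + (r ♯ (b' - ω ^ δ * k)) := key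
        _ < ω ^ δ * (m + k : ℕ) + (r ♯ s) :=
          (add_lt_add_iff_left _).2 (nadd_lt_nadd_left hs' r)
    · push_neg at h
      obtain ⟨k', rfl⟩ : ∃ k', k = k' + 1 := by
        cases k with
        | zero => simp at h
        | succ k' => exact ⟨k', rfl⟩
      have hsplit : (ω ^ δ) * ((k' + 1 : ℕ) : Ordinal) = ω ^ δ * k' + ω ^ δ := by
        push_cast; rw [mul_add, mul_one]
      have h2 : b' < ω ^ δ * k' + ω ^ δ := by rw [← hsplit]; exact h
      have hs'' : b' - ω ^ δ * k' < ω ^ δ := sub_lt_of_lt_add h2 hω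
      have key := step a b' m k' r (b' - ω ^ δ * k') hr hs''
        ha (Ordinal.le_add_sub b' _) hab'
      calc a ♯ b' ≤ ω ^ δ * (m + k' : ℕ) + (r ♯ (b' - ω ^ δ * k')) := key
        _ < ω ^ δ * (m + k' : ℕ) + ω ^ δ := (add_lt_add_iff_left _).2 (H _ _ hr hs'')
        _ = ω ^ δ * ((m + k' + 1 : ℕ) : Ordinal) := by
            rw [Nat.cast_add_one, mul_add, mul_one]
        _ = ω ^ δ * ((m + (k' + 1) : ℕ) : Ordinal) := by
            rw [show m + k' + 1 = m + (k' + 1) from by omega]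
        _ ≤ ω ^ δ * (m + (k' + 1) : ℕ) + (r ♯ s) := le_self_add

private theorem nadd_closed (α : Ordinal) :
    ∀ r s, r < ω ^ α → s < ω ^ α → r ♯ s < ω ^ α := by
  induction α using Ordinal.induction with
  | h α IH =>
  intro r s hr hs
  rcases eq_or_ne r 0 with rfl | hr0
  · simpa using hs
  rcases eq_or_ne s 0 with rfl | hs0
  · simpa using hr
  set γ := max (log ω r) (log ω s) with hγ
  have hγα : γ < α := by
    have h1 : log ω r < α := (lt_opow_iff_log_lt one_lt_omega0 hr0).1 hr
    have h2 : log ω s < α := (lt_opow_iff_log_lt one_lt_omega0 hs0).1 hs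
    exact max_lt h1 h2
  have hrγ : r < ω ^ (γ + 1) := by
    apply lt_opow_of_log_lt one_lt_omega0
    have h1 : log ω r ≤ γ := le_max_left (log ω r) (log ω s)
    refine lt_of_le_of_lt h1 ?_
    rw [Ordinal.add_one_eq_succ]
    exact Order.lt_succ γ
  have hsγ : s < ω ^ (γ + 1) := by
    apply lt_opow_of_log_lt one_lt_omega0
    have h1 : log ω s ≤ γ := le_max_right (log ω r) (log ω s)
    refine lt_of_le_of_lt h1 ?_
    rw [Ordinal.add_one_eq_succ]
    exact Order.lt_succ γ
  rw [Ordinal.add_one_eq_succ, opow_succ] at hrγ hsγ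
  obtain ⟨m', hm'ω, hm'⟩ := (lt_mul_iff_of_isSuccLimit isSuccLimit_omega0).1 hrγ
  obtain ⟨k', hk'ω, hk'⟩ := (lt_mul_iff_of_isSuccLimit isSuccLimit_omega0).1 hsγ
  obtain ⟨m, rfl⟩ := lt_omega0.1 hm'ω
  obtain ⟨k, rfl⟩ := lt_omega0.1 hk'ω
  have hω : (0 : Ordinal) < ω ^ γ := opow_pos γ omega0_pos
  have key := nadd_key γ (IH γ hγα) (r ♯ s) r s m k 0 0 hω hω
    (by simpa using hm'.le) (by simpa using hk'.le) le_rfl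
  simp only [nadd_zero, add_zero] at key
  calc r ♯ s ≤ ω ^ γ * (m + k : ℕ) := key
    _ < ω ^ γ * ω := by
        apply (mul_lt_mul_iff_right₀ hω).2
        exact nat_lt_omega0 _
    _ = ω ^ (γ + 1) := by rw [Ordinal.add_one_eq_succ, opow_succ]
    _ ≤ ω ^ α := opow_le_opow_right omega0_pos (by rwa [Ordinal.add_one_eq_succ, Order.succ_le_iff])

theorem leading_term_le_of_le_nadd (α : Ordinal) (n : ℕ) (hn : 1 ≤ n)
    (x y z : Ordinal)
    (hx₁ : ω ^ α * (n : Ordinal) ≤ x) (hx₂ : x < ω ^ α * ((n : Ordinal) + 1))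
    (hxyz : x ≤ y ♯ z) (hz : z < ω ^ α) :
    ω ^ α * (n : Ordinal) ≤ y := by
  by_contra hy
  push_neg at hy
  obtain ⟨m, rfl⟩ : ∃ m, n = m + 1 := ⟨n - 1, by omega⟩
  have hω : (0 : Ordinal) < ω ^ α := opow_pos α omega0_pos
  have hsplit : (ω ^ α) * ((m + 1 : ℕ) : Ordinal) = ω ^ α * m + ω ^ α := by
    push_cast; rw [mul_add, mul_one]
  have hy2 : y < ω ^ α * m + ω ^ α := by
    rw [← hsplit]; exact_mod_cast hy
  have hr : y - ω ^ α * m < ω ^ α := sub_lt_of_lt_add hy2 hω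
  have key := nadd_key α (nadd_closed α) (y ♯ z) y z m 0 (y - ω ^ α * m) z hr hz
    (Ordinal.le_add_sub y _) (by simpa using le_rfl) le_rfl
  have : y ♯ z < ω ^ α * ((m + 1 : ℕ) : Ordinal) := by
    calc y ♯ z ≤ ω ^ α * (m + 0 : ℕ) + ((y - ω ^ α * m) ♯ z) := key
      _ < ω ^ α * (m + 0 : ℕ) + ω ^ α := (add_lt_add_iff_left _).2 (nadd_closed α _ _ hr hz)
      _ = ω ^ α * m + ω ^ α := by norm_num
      _ = ω ^ α * ((m + 1 : ℕ) : Ordinal) := hsplit.symm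
  exact absurd (hx₁.trans hxyz) (not_le.2 (this.trans_le (by exact_mod_cast le_rfl)))
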